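/- On Minkowski space ℝ^{1+m} = ℝ × ℝ^m with future causal cone C = {(v_0, v̄) ≠ 0 : v_0 ≥ ‖v̄‖}, call a Lipschitz curve β : [0,1] → ℝ^{1+m} piecewise causal if there is a partition 0 = a_0 < a_1 < … < a_k = 1 such that on each subinterval [a_{l−1}, a_l] the almost-everywhere derivative of β lies in C ∪ {0} or in (−C) ∪ {0}; its null length with respect to the time function t(p) = p_0 is L̂(β) = ∑_{l=1}^k |β_0(a_l) − β_0(a_{l−1})|. Then for all p, q ∈ ℝ^{1+m}, the null distance d̂_t(p,q) = inf{L̂(β) : β piecewise causal from p to q} equals max(|q_0 − p_0|, ‖q̄ − p̄‖), where ‖·‖ is the Euclidean norm on ℝ^m. -/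

import Mathlib

open MeasureTheory Set Filter Topology


open MeasureTheory

/-- The set of null lengths of piecewise causal Lipschitz curves from `p` to `q`
in Minkowski space `ℝ × ℝ^m`, with respect to the canonical time function
`t(p) = p₀`: a curve `β` is piecewise causal if for some partition
`0 = a₀ < a₁ < … < a_k = 1` its a.e. derivative lies in `C ∪ {0}` or in
`(−C) ∪ {0}` on each subinterval, and its null length is
`∑ |β₀(a_l) − β₀(a_{l−1})|`. -/
def minkNullLengths (m : ℕ) (p q : ℝ × EuclideanSpace ℝ (Fin m)) : Set ℝ :=
  {L | ∃ (k : ℕ) (a : Fin (k + 1) → ℝ) (K : NNReal)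
      (β : ℝ → ℝ × EuclideanSpace ℝ (Fin m)),
    StrictMono a ∧ a 0 = 0 ∧ a (Fin.last k) = 1 ∧
    LipschitzWith K β ∧ β 0 = p ∧ β 1 = q ∧
    (∀ l : Fin k,
      (∀ᵐ s ∂(volume : Measure ℝ), s ∈ Set.Icc (a l.castSucc) (a l.succ) →
        ∃ v, HasDerivAt β v s ∧ (v = 0 ∨ ‖v.2‖ ≤ v.1)) ∨
      (∀ᵐ s ∂(volume : Measure ℝ), s ∈ Set.Icc (a l.castSucc) (a l.succ) →
        ∃ v, HasDerivAt β v s ∧ (v = 0 ∨ ‖v.2‖ ≤ -v.1))) ∧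
    L = ∑ l : Fin k, |(β (a l.succ)).1 - (β (a l.castSucc)).1|}

private lemma aux_mono {K : NNReal} {g : ℝ → ℝ} (hg : LipschitzWith K g) {c d : ℝ} (hcd : c ≤ d)
    (h : ∀ᵐ s ∂(volume : Measure ℝ), s ∈ Set.Icc c d → ∃ v, HasDerivAt g v s ∧ 0 ≤ v) :
    g c ≤ g d := by
  have hKnn : (0:ℝ) ≤ (K:ℝ) := K.coe_nonneg
  have main : ∀ ε : ℝ, 0 < ε → g c - g d ≤ ε * (d - c) + 2 * K * ε := by
    intro ε hε
    set N := {s : ℝ | ¬ (s ∈ Set.Icc c d → ∃ v, HasDerivAt g v s ∧ 0 ≤ v)} with hN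
    have hNnull : volume N = 0 := by rwa [MeasureTheory.ae_iff] at h
    obtain ⟨U, hNU, hUopen, hUvol⟩ : ∃ U ⊇ N, IsOpen U ∧ volume U < ENNReal.ofReal ε := by
      apply Set.exists_isOpen_lt_of_lt
      rw [hNnull]
      exact ENNReal.ofReal_pos.2 hε
    have hUfin : volume U ≠ ⊤ := hUvol.ne_top
    set φ : ℝ → ℝ := fun t => (volume (U ∩ Set.Icc c t)).toReal with hφdef
    have hfin : ∀ t, volume (U ∩ Set.Icc c t) ≠ ⊤ :=
      fun t => ((measure_mono Set.inter_subset_left).trans_lt hUvol).ne_top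
    have hφmono : Monotone φ := by
      intro t t' htt'
      exact ENNReal.toReal_mono (hfin t')
        (measure_mono (Set.inter_subset_inter_right _ (Set.Icc_subset_Icc_right htt')))
    have hφstep : ∀ t t' : ℝ, t ≤ t' → φ t' ≤ φ t + (t' - t) := by
      intro t t' htt'
      have hsub : U ∩ Set.Icc c t' ⊆ (U ∩ Set.Icc c t) ∪ Set.Ioc t t' := by
        rintro s ⟨hsU, hsc, hst'⟩
        rcases le_or_gt s t with hst | hst
        · exact Or.inl ⟨hsU, hsc, hst⟩
        · exact Or.inr ⟨hst, hst'⟩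
      have := (measure_mono hsub).trans (measure_union_le (μ := volume) _ _)
      rw [Real.volume_Ioc] at this
      calc φ t' ≤ (volume (U ∩ Set.Icc c t) + ENNReal.ofReal (t' - t)).toReal :=
            ENNReal.toReal_mono (by
              exact ENNReal.add_ne_top.2 ⟨hfin t, ENNReal.ofReal_ne_top⟩) this
        _ = φ t + (t' - t) := by
            rw [ENNReal.toReal_add (hfin t) ENNReal.ofReal_ne_top,
              ENNReal.toReal_ofReal (by linarith)]
    have hφcont : Continuous φ := by
      have : LipschitzWith 1 φ := by
        apply LipschitzWith.of_dist_le_mul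
        intro x y
        rcases le_total x y with hxy | hxy
        · rw [Real.dist_eq, Real.dist_eq, abs_of_nonpos (by simpa using hφmono hxy),
            abs_of_nonpos (by linarith)]
          have := hφstep x y hxy
          push_cast
          linarith
        · rw [Real.dist_eq, Real.dist_eq, abs_of_nonneg (by simpa using hφmono hxy),
            abs_of_nonneg (by linarith)]
          have := hφstep y x hxy
          push_cast
          linarith
      exact this.continuous
    set S := {t : ℝ | g c - g t ≤ ε * (t - c) + 2 * K * φ t} with hSdef
    have hScl : IsClosed (S ∩ Set.Icc c d) := by
      apply IsClosed.inter _ isClosed_Icc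
      exact isClosed_le (continuous_const.sub hg.continuous)
        ((continuous_const.mul (continuous_sub_right c)).add (continuous_const.mul hφcont))
    have hcS : c ∈ S := by
      have : (0:ℝ) ≤ φ c := ENNReal.toReal_nonneg
      simp only [hSdef, Set.mem_setOf_eq, sub_self, mul_zero]
      nlinarith
    have hdS : d ∈ S := by
      refine hScl.Icc_subset_of_forall_exists_gt hcS ?_ ⟨hcd, le_refl d⟩
      rintro t ⟨htS, htc, htd⟩ y hy
      by_cases htN : t ∈ N
      · -- exceptional point: inside the open set U
        obtain ⟨δ, hδpos, hball⟩ := Metric.isOpen_iff.1 hUopen t (hNU htN)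
        set u := min (t + δ/2) y with hu
        have htu : t < u := lt_min (by linarith) hy
        have huy : u ≤ y := min_le_right _ _
        have hIocU : Set.Ioc t u ⊆ U := by
          intro s hs
          apply hball
          rw [Metric.mem_ball, Real.dist_eq, abs_of_pos (by linarith [hs.1])]
          have : u ≤ t + δ/2 := min_le_left _ _
          linarith [hs.2]
        -- measure increment
        have hmeas : volume (U ∩ Set.Icc c t) + ENNReal.ofReal (u - t) ≤
            volume (U ∩ Set.Icc c u) := by
          have hdisj : Disjoint (U ∩ Set.Icc c t) (Set.Ioc t u) := by
            apply Set.disjoint_left.2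
            rintro s ⟨_, _, hst⟩ ⟨hts, _⟩
            exact absurd hst (not_le.2 hts)
          have hsub : (U ∩ Set.Icc c t) ∪ Set.Ioc t u ⊆ U ∩ Set.Icc c u := by
            rintro s (⟨hsU, hsc, hst⟩ | hs)
            · exact ⟨hsU, hsc, hst.trans htu.le⟩
            · exact ⟨hIocU hs, htc.trans hs.1.le, hs.2⟩
          calc volume (U ∩ Set.Icc c t) + ENNReal.ofReal (u - t)
              = volume ((U ∩ Set.Icc c t) ∪ Set.Ioc t u) := by
                rw [measure_union hdisj measurableSet_Ioc, Real.volume_Ioc]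
            _ ≤ volume (U ∩ Set.Icc c u) := measure_mono hsub
        have hφu : φ t + (u - t) ≤ φ u := by
          have := ENNReal.toReal_mono (hfin u) hmeas
          rwa [ENNReal.toReal_add (hfin t) ENNReal.ofReal_ne_top,
            ENNReal.toReal_ofReal (by linarith)] at this
        refine ⟨u, ?_, htu, huy⟩
        have hgtu : |g t - g u| ≤ K * (u - t) := by
          have hd := hg.dist_le_mul t u
          rw [Real.dist_eq, Real.dist_eq] at hd
          have habs : |t - u| = u - t := by
            rw [abs_of_nonpos (by linarith)]; ring
          rwa [habs] at hd
        have := htS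
        simp only [hSdef, Set.mem_setOf_eq] at this ⊢
        have h1 : g c - g u ≤ (g c - g t) + |g t - g u| := by
          cases abs_cases (g t - g u) with
          | inl h => linarith [h.1]
          | inr h => linarith [h.1]
        nlinarith [hφmono htu.le]
      · -- good point: derivative exists and is nonnegative
        simp only [hN, Set.mem_setOf_eq, not_not] at htN
        obtain ⟨v, hv, hvnn⟩ := htN ⟨htc, htd.le⟩
        have hslope := hasDerivAt_iff_tendsto_slope.1 hv
        have E1 : ∀ᶠ z in 𝓝[≠] t, -ε < slope g t z :=
          hslope.eventually (eventually_gt_nhds (by linarith))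
        have E2 : ∀ᶠ z in 𝓝[>] t, -ε < slope g t z :=
          E1.filter_mono (nhdsWithin_mono t (fun z hz => ne_of_gt hz))
        have E3 : Set.Ioc t y ∈ 𝓝[>] t := Ioc_mem_nhdsGT_of_mem ⟨le_refl t, hy⟩
        obtain ⟨u, hu1, hu2⟩ := (E2.and (eventually_of_mem E3 (fun z hz => hz))).exists
        refine ⟨u, ?_, hu2⟩
        have htu : t < u := hu2.1
        rw [slope_def_field] at hu1
        have hgu : -ε * (u - t) < g u - g t := by
          have := (lt_div_iff₀ (by linarith : (0:ℝ) < u - t)).1 hu1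
          linarith
        have := htS
        simp only [hSdef, Set.mem_setOf_eq] at this ⊢
        nlinarith [hφmono htu.le]
    -- conclude
    have hφd : φ d ≤ ε := by
      have h1 : volume (U ∩ Set.Icc c d) ≤ ENNReal.ofReal ε :=
        (measure_mono Set.inter_subset_left).trans hUvol.le
      calc φ d ≤ (ENNReal.ofReal ε).toReal := ENNReal.toReal_mono ENNReal.ofReal_ne_top h1
        _ = ε := ENNReal.toReal_ofReal hε.le
    simp only [hSdef, Set.mem_setOf_eq] at hdS
    nlinarith
  by_contra hlt
  push_neg at hlt
  set x := g c - g d with hx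
  have hxpos : 0 < x := by simp [hx]; linarith
  set A := (d - c) + 2 * (K:ℝ) with hA
  have hApos : (0:ℝ) < A + 1 := by simp [hA]; nlinarith
  have hε : 0 < x / (A + 1) := div_pos hxpos hApos
  have := main (x / (A + 1)) hε
  have h2 : x / (A + 1) * (A + 1) = x := div_mul_cancel₀ _ (by linarith)
  nlinarith

lemma seg_causal {m : ℕ} {K : NNReal} {β : ℝ → ℝ × EuclideanSpace ℝ (Fin m)}
    (hβ : LipschitzWith K β) {c d : ℝ} (hcd : c ≤ d)
    (h : ∀ᵐ s ∂(volume : Measure ℝ), s ∈ Set.Icc c d →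
      ∃ v, HasDerivAt β v s ∧ ‖v.2‖ ≤ v.1) :
    ‖(β d).2 - (β c).2‖ ≤ (β d).1 - (β c).1 := by
  have key : ∀ w : EuclideanSpace ℝ (Fin m), ‖w‖ ≤ 1 →
      (inner ℝ w ((β d).2 - (β c).2) : ℝ) ≤ (β d).1 - (β c).1 := by
    intro w hw
    set L : (ℝ × EuclideanSpace ℝ (Fin m)) →L[ℝ] ℝ :=
      ContinuousLinearMap.fst ℝ ℝ _ - (innerSL ℝ w).comp (ContinuousLinearMap.snd ℝ ℝ _)
      with hL
    have hLapp : ∀ x : ℝ × EuclideanSpace ℝ (Fin m), L x = x.1 - (inner ℝ w x.2 : ℝ) := by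
      intro x; simp [hL]
    have hgl : LipschitzWith (‖L‖₊ * K) (fun s => L (β s)) := L.lipschitz.comp hβ
    have hmono := aux_mono hgl hcd ?_
    · have h1 := hLapp (β c); have h2 := hLapp (β d)
      simp only [h1, h2] at hmono
      rw [inner_sub_right]
      linarith
    · filter_upwards [h] with s hs hmem
      obtain ⟨v, hv, hvle⟩ := hs hmem
      refine ⟨L v, L.hasFDerivAt.comp_hasDerivAt s hv, ?_⟩
      rw [hLapp]
      have := real_inner_le_norm w v.2
      have h2 : ‖w‖ * ‖v.2‖ ≤ ‖v.2‖ := mul_le_of_le_one_left (norm_nonneg _) hw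
      linarith
  have hΔ1 : 0 ≤ (β d).1 - (β c).1 := by
    have := key 0 (by simp)
    simpa using this
  rcases eq_or_ne ((β d).2 - (β c).2) 0 with h0 | h0
  · rw [h0, norm_zero]; exact hΔ1
  · set Δ := (β d).2 - (β c).2 with hΔ
    have hn : (0:ℝ) < ‖Δ‖ := norm_pos_iff.2 h0
    have := key (‖Δ‖⁻¹ • Δ) (by
      rw [norm_smul, norm_inv, norm_norm]
      rw [inv_mul_cancel₀ hn.ne'])
    rwa [real_inner_smul_left, real_inner_self_eq_norm_mul_norm,
      inv_mul_cancel_left₀ hn.ne'] at this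

lemma seg_ineq {m : ℕ} {K : NNReal} {β : ℝ → ℝ × EuclideanSpace ℝ (Fin m)}
    (hβ : LipschitzWith K β) {c d : ℝ} (hcd : c ≤ d)
    (h : (∀ᵐ s ∂(volume : Measure ℝ), s ∈ Set.Icc c d →
        ∃ v, HasDerivAt β v s ∧ (v = 0 ∨ ‖v.2‖ ≤ v.1)) ∨
      (∀ᵐ s ∂(volume : Measure ℝ), s ∈ Set.Icc c d →
        ∃ v, HasDerivAt β v s ∧ (v = 0 ∨ ‖v.2‖ ≤ -v.1))) :
    ‖(β d).2 - (β c).2‖ ≤ |(β d).1 - (β c).1| := by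
  rcases h with h | h
  · refine le_trans (seg_causal hβ hcd ?_) (le_abs_self _)
    filter_upwards [h] with s hs hmem
    obtain ⟨v, hv, hvle⟩ := hs hmem
    refine ⟨v, hv, ?_⟩
    rcases hvle with rfl | hvle
    · simp
    · exact hvle
  · set N : (ℝ × EuclideanSpace ℝ (Fin m)) →L[ℝ] (ℝ × EuclideanSpace ℝ (Fin m)) :=
      (-(ContinuousLinearMap.fst ℝ ℝ (EuclideanSpace ℝ (Fin m)))).prod
        (ContinuousLinearMap.snd ℝ ℝ (EuclideanSpace ℝ (Fin m))) with hNdef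
    have hNapp : ∀ x : ℝ × EuclideanSpace ℝ (Fin m), N x = (-x.1, x.2) := by
      intro x; simp [hNdef]
    have hβ' : LipschitzWith (‖N‖₊ * K) (fun s => N (β s)) := N.lipschitz.comp hβ
    have := seg_causal hβ' hcd ?_
    · rw [hNapp, hNapp] at this
      simp only at this
      calc ‖(β d).2 - (β c).2‖ ≤ -(β d).1 - -(β c).1 := this
        _ ≤ |(β d).1 - (β c).1| := by
            rw [abs_sub_comm]
            calc -(β d).1 - -(β c).1 = (β c).1 - (β d).1 := by ring
              _ ≤ |(β c).1 - (β d).1| := le_abs_self _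
    · filter_upwards [h] with s hs hmem
      obtain ⟨v, hv, hvle⟩ := hs hmem
      refine ⟨N v, N.hasFDerivAt.comp_hasDerivAt s hv, ?_⟩
      rw [hNapp]
      rcases hvle with rfl | hvle
      · simp
      · simpa using hvle

lemma telescope {X : Type*} [AddCommGroup X] (k : ℕ) (h : Fin (k+1) → X) :
    ∑ l : Fin k, (h l.succ - h l.castSucc) = h (Fin.last k) - h 0 := by
  induction k with
  | zero => simp [Fin.last]
  | succ n ih =>
    rw [Fin.sum_univ_castSucc]
    have := ih (fun i => h i.castSucc)
    simp only [Fin.succ_castSucc] at this ⊢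
    rw [this]
    have h1 : (Fin.last n).castSucc = (Fin.last n).castSucc := rfl
    have h2 : ((0 : Fin (n+1)).castSucc) = (0 : Fin (n+2)) := rfl
    rw [h2]
    abel

lemma mem_case1 (m : ℕ) (p q : ℝ × EuclideanSpace ℝ (Fin m))
    (hle : ‖q.2 - p.2‖ ≤ |q.1 - p.1|) :
    max |q.1 - p.1| ‖q.2 - p.2‖ ∈ minkNullLengths m p q := by
  set Δ₁ := q.1 - p.1 with hΔ₁
  set Δ₂ := q.2 - p.2 with hΔ₂
  refine ⟨1, ![0, 1], ‖Δ₁‖₊ + ‖Δ₂‖₊,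
    fun s => (p.1 + s * Δ₁, p.2 + s • Δ₂), ?_, ?_, ?_, ?_, ?_, ?_, ?_, ?_⟩
  · intro i j hij
    fin_cases i <;> fin_cases j <;> simp_all <;> norm_num
  · simp
  · simp [Fin.last]
  · apply LipschitzWith.of_dist_le_mul
    intro x y
    rw [Prod.dist_eq]
    push_cast
    apply max_le
    · rw [Real.dist_eq, Real.dist_eq]
      have : p.1 + x * Δ₁ - (p.1 + y * Δ₁) = Δ₁ * (x - y) := by ring
      rw [this, abs_mul]
      have h1 : |Δ₁| * |x - y| ≤ (|Δ₁| + ‖Δ₂‖) * |x - y| := by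
        apply mul_le_mul_of_nonneg_right _ (abs_nonneg _)
        linarith [norm_nonneg Δ₂]
      simpa [Real.norm_eq_abs] using h1
    · rw [dist_eq_norm]
      have : p.2 + x • Δ₂ - (p.2 + y • Δ₂) = (x - y) • Δ₂ := by
        module
      rw [this, norm_smul, Real.norm_eq_abs, Real.dist_eq]
      have h1 : |x - y| * ‖Δ₂‖ ≤ (|Δ₁| + ‖Δ₂‖) * |x - y| := by
        rw [mul_comm]
        apply mul_le_mul_of_nonneg_right _ (abs_nonneg _)
        linarith [abs_nonneg Δ₁]
      simpa [Real.norm_eq_abs] using h1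
  · ext <;> simp
  · have h1 : p.1 + 1 * Δ₁ = q.1 := by rw [hΔ₁]; ring
    have h2 : p.2 + (1:ℝ) • Δ₂ = q.2 := by rw [hΔ₂, one_smul]; abel
    show (p.1 + 1 * Δ₁, p.2 + (1:ℝ) • Δ₂) = q
    rw [h1, h2]
  · intro l
    have hasD : ∀ s : ℝ, HasDerivAt (fun s : ℝ => (p.1 + s * Δ₁, p.2 + s • Δ₂))
        (Δ₁, Δ₂) s := by
      intro s
      apply HasDerivAt.prodMk
      · simpa using ((hasDerivAt_id s).mul_const Δ₁).const_add p.1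
      · simpa using ((hasDerivAt_id s).smul_const Δ₂).const_add p.2
    rcases le_or_gt 0 Δ₁ with hsgn | hsgn
    · left
      filter_upwards with s hs
      exact ⟨(Δ₁, Δ₂), hasD s, Or.inr (by rw [abs_of_nonneg hsgn] at hle; exact hle)⟩
    · right
      filter_upwards with s hs
      exact ⟨(Δ₁, Δ₂), hasD s, Or.inr (by rw [abs_of_neg hsgn] at hle; exact hle)⟩
  · have : ∑ l : Fin 1, |((fun s : ℝ => (p.1 + s * Δ₁, p.2 + s • Δ₂)) (![0,1] l.succ)).1 -
        ((fun s : ℝ => (p.1 + s * Δ₁, p.2 + s • Δ₂)) (![0,1] l.castSucc)).1| = |Δ₁| := by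
      simp [Fin.sum_univ_succ]
    rw [this]
    exact max_eq_left hle

set_option maxHeartbeats 1000000 in
lemma mem_case2 (m : ℕ) (p q : ℝ × EuclideanSpace ℝ (Fin m))
    (hlt : |q.1 - p.1| < ‖q.2 - p.2‖) :
    max |q.1 - p.1| ‖q.2 - p.2‖ ∈ minkNullLengths m p q := by
  set Δ₁ := q.1 - p.1 with hΔ₁
  set Δ₂ := q.2 - p.2 with hΔ₂
  set r := ‖Δ₂‖ with hr
  have hrpos : 0 < r := lt_of_le_of_lt (abs_nonneg _) hlt
  have habs := abs_lt.1 hlt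
  set u := (Δ₁ + r) / (2 * r) with hu
  have hu0 : 0 < u := div_pos (by linarith) (by linarith)
  have hu1 : u < 1 := by
    rw [hu, div_lt_one (by linarith)]
    linarith
  have hru : r * u = (Δ₁ + r) / 2 := by
    rw [hu]; field_simp
  set f : ℝ → ℝ := fun s => min (p.1 + r * s) (q.1 + r * (1 - s)) with hf
  -- pointwise formulas for f
  have hfle : ∀ s : ℝ, s ≤ u → f s = p.1 + r * s := by
    intro s hs
    apply min_eq_left
    have : 2 * r * s ≤ 2 * r * u := by
      apply mul_le_mul_of_nonneg_left hs (by linarith)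
    nlinarith
  have hfge : ∀ s : ℝ, u ≤ s → f s = q.1 + r * (1 - s) := by
    intro s hs
    apply min_eq_right
    have : 2 * r * u ≤ 2 * r * s := by
      apply mul_le_mul_of_nonneg_left hs (by linarith)
    nlinarith
  have hf0 : f 0 = p.1 := by rw [hfle 0 hu0.le]; ring
  have hf1 : f 1 = q.1 := by rw [hfge 1 hu1.le]; ring
  have hfu : f u = p.1 + (Δ₁ + r) / 2 := by rw [hfle u le_rfl, hru]
  refine ⟨2, ![0, u, 1], ‖r‖₊ + ‖Δ₂‖₊,
    fun s => (f s, p.2 + s • Δ₂), ?_, ?_, ?_, ?_, ?_, ?_, ?_, ?_⟩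
  · intro i j hij
    fin_cases i <;> fin_cases j <;> simp_all <;> linarith
  · simp
  · simp [Fin.last]
  · apply LipschitzWith.of_dist_le_mul
    intro x y
    rw [Prod.dist_eq]
    push_cast
    apply max_le
    · rw [Real.dist_eq]
      have h1 : |f x - f y| ≤ max |p.1 + r * x - (p.1 + r * y)| |q.1 + r * (1 - x) - (q.1 + r * (1 - y))| :=
        abs_min_sub_min_le_max _ _ _ _
      have h2 : p.1 + r * x - (p.1 + r * y) = r * (x - y) := by ring
      have h3 : q.1 + r * (1 - x) - (q.1 + r * (1 - y)) = -(r * (x - y)) := by ring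
      rw [h2, h3, abs_neg, max_self, abs_mul] at h1
      refine h1.trans ?_
      rw [Real.dist_eq]
      have : |r| * |x - y| ≤ (|r| + ‖Δ₂‖) * |x - y| := by
        apply mul_le_mul_of_nonneg_right _ (abs_nonneg _)
        linarith [norm_nonneg Δ₂]
      simpa [Real.norm_eq_abs] using this
    · rw [dist_eq_norm]
      have h4 : p.2 + x • Δ₂ - (p.2 + y • Δ₂) = (x - y) • Δ₂ := by module
      rw [h4, norm_smul, Real.norm_eq_abs, Real.dist_eq]
      have : |x - y| * ‖Δ₂‖ ≤ (|r| + ‖Δ₂‖) * |x - y| := by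
        rw [mul_comm]
        apply mul_le_mul_of_nonneg_right _ (abs_nonneg _)
        linarith [abs_nonneg r]
      simpa [Real.norm_eq_abs] using this
  · show (f 0, p.2 + (0:ℝ) • Δ₂) = p
    rw [hf0]
    simp
  · show (f 1, p.2 + (1:ℝ) • Δ₂) = q
    rw [hf1, one_smul]
    have : p.2 + Δ₂ = q.2 := by rw [hΔ₂]; abel
    rw [this]
  · -- causality on each of the two subintervals
    have hDspace : ∀ s : ℝ, HasDerivAt (fun s : ℝ => p.2 + s • Δ₂) Δ₂ s := by
      intro s
      simpa using ((hasDerivAt_id s).smul_const Δ₂).const_add p.2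
    have hD1 : ∀ s : ℝ, s < u → HasDerivAt f r s := by
      intro s hs
      have haff : HasDerivAt (fun x : ℝ => p.1 + r * x) r s := by
        simpa using ((hasDerivAt_id s).const_mul r).const_add p.1
      apply haff.congr_of_eventuallyEq
      filter_upwards [Iio_mem_nhds hs] with x hx
      exact hfle x (le_of_lt hx)
    have hD2 : ∀ s : ℝ, u < s → HasDerivAt f (-r) s := by
      intro s hs
      have haff : HasDerivAt (fun x : ℝ => q.1 + r * (1 - x)) (-r) s := by
        have h5 : HasDerivAt (fun x : ℝ => (q.1 + r) + (-r) * x) (-r) s := by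
          simpa using ((hasDerivAt_id s).const_mul (-r)).const_add (q.1 + r)
        have h6 : (fun x : ℝ => q.1 + r * (1 - x)) = (fun x : ℝ => (q.1 + r) + (-r) * x) := by
          funext x; ring
        rw [h6]; exact h5
      apply haff.congr_of_eventuallyEq
      filter_upwards [Ioi_mem_nhds hs] with x hx
      exact hfge x (le_of_lt hx)
    have hae : ∀ᵐ s ∂(volume : Measure ℝ), s ≠ u := by
      rw [MeasureTheory.ae_iff]
      have : {s : ℝ | ¬s ≠ u} = {u} := by ext s; simp
      rw [this]
      exact Real.volume_singleton
    intro l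
    fin_cases l
    · -- interval [0, u]
      left
      filter_upwards [hae] with s hsne hmem
      simp only [Fin.castSucc, Fin.succ] at hmem
      have hmem' : s ∈ Set.Icc (0:ℝ) u := by simpa using hmem
      have hsu : s < u := lt_of_le_of_ne hmem'.2 hsne
      exact ⟨(r, Δ₂), (hD1 s hsu).prodMk (hDspace s), Or.inr (le_of_eq hr.symm)⟩
    · -- interval [u, 1]
      right
      filter_upwards [hae] with s hsne hmem
      have hmem' : s ∈ Set.Icc u (1:ℝ) := by simpa using hmem
      have hsu : u < s := lt_of_le_of_ne hmem'.1 (Ne.symm hsne)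
      refine ⟨(-r, Δ₂), (hD2 s hsu).prodMk (hDspace s), Or.inr ?_⟩
      simp [hr]
  · have hsum : ∑ l : Fin 2, |((fun s : ℝ => (f s, p.2 + s • Δ₂)) (![0,u,1] l.succ)).1 -
        ((fun s : ℝ => (f s, p.2 + s • Δ₂)) (![0,u,1] l.castSucc)).1| =
        |f u - f 0| + |f 1 - f u| := by
      simp [Fin.sum_univ_succ]
    rw [hsum, hf0, hf1, hfu]
    have e1 : |p.1 + (Δ₁ + r) / 2 - p.1| = (Δ₁ + r) / 2 := by
      rw [abs_of_nonneg (by linarith)]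
      ring
    have e2 : |q.1 - (p.1 + (Δ₁ + r) / 2)| = (r - Δ₁) / 2 := by
      have : q.1 - (p.1 + (Δ₁ + r) / 2) = -((r - Δ₁)/2) := by rw [hΔ₁]; ring
      rw [this, abs_neg, abs_of_nonneg (by linarith)]
    rw [e1, e2]
    rw [max_eq_right hlt.le]
    ring

lemma mink_lower (m : ℕ) (p q : ℝ × EuclideanSpace ℝ (Fin m)) :
    ∀ L ∈ minkNullLengths m p q, max |q.1 - p.1| ‖q.2 - p.2‖ ≤ L := by
  rintro L ⟨k, a, K, β, hmono, ha0, halast, hlip, hβ0, hβ1, hcaus, rfl⟩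
  have hseg : ∀ l : Fin k,
      ‖(β (a l.succ)).2 - (β (a l.castSucc)).2‖ ≤
        |(β (a l.succ)).1 - (β (a l.castSucc)).1| :=
    fun l => seg_ineq hlip (hmono (Fin.castSucc_lt_succ (i := l))).le (hcaus l)
  have ht1 := telescope k (fun i => (β (a i)).1)
  have ht2 := telescope k (fun i => (β (a i)).2)
  simp only [ha0, halast, hβ0, hβ1] at ht1 ht2
  apply max_le
  · calc |q.1 - p.1| = |∑ l : Fin k, ((β (a l.succ)).1 - (β (a l.castSucc)).1)| := by
          rw [ht1]
      _ ≤ ∑ l : Fin k, |(β (a l.succ)).1 - (β (a l.castSucc)).1| :=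
          Finset.abs_sum_le_sum_abs _ _
  · calc ‖q.2 - p.2‖ = ‖∑ l : Fin k, ((β (a l.succ)).2 - (β (a l.castSucc)).2)‖ := by
          rw [ht2]
      _ ≤ ∑ l : Fin k, ‖(β (a l.succ)).2 - (β (a l.castSucc)).2‖ := norm_sum_le _ _
      _ ≤ ∑ l : Fin k, |(β (a l.succ)).1 - (β (a l.castSucc)).1| :=
          Finset.sum_le_sum (fun l _ => hseg l)

/-- Lemma 2.9 specialized to the flat fiber `Σ = ℝ^m`: the null distance of
Minkowski space with the canonical time function `t(p) = p₀` is
`d̂_t(p,q) = max(|q₀ − p₀|, ‖q̄ − p̄‖)`. -/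
theorem mink_null_distance_eq_max (m : ℕ) (p q : ℝ × EuclideanSpace ℝ (Fin m)) :
    sInf (minkNullLengths m p q) = max |q.1 - p.1| ‖q.2 - p.2‖ := by
  have hmem : max |q.1 - p.1| ‖q.2 - p.2‖ ∈ minkNullLengths m p q := by
    rcases le_or_gt ‖q.2 - p.2‖ |q.1 - p.1| with h | h
    · exact mem_case1 m p q h
    · exact mem_case2 m p q h
  have hlb := mink_lower m p q
  exact le_antisymm (csInf_le ⟨_, fun x hx => hlb x hx⟩ hmem)
    (le_csInf ⟨_, hmem⟩ (fun b hb => hlb b hb))
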